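/- Let K be a finite abelian group of even order d > 4, H a subgroup of index 2 in K, h ∈ H, and g ∈ K \ H. Then the set B = (H \ {h}) ∪ {g} satisfies |B| = d/2 and B + B = K \ {h + g}, so |B + B| = d − 1. -/

import Mathlib

open Finset Pointwise Classical in
theorem stmt_12 {K : Type*} [AddCommGroup K] [Fintype K] [DecidableEq K]
    (d : ℕ) (hd : Fintype.card K = d) (hdeven : Even d) (hd4 : 4 < d)
    (H : AddSubgroup K) (hH : H.index = 2)
    (h : K) (hh : h ∈ H) (g : K) (hg : g ∉ H) :
    let B : Finset K := insert g ((Finset.univ.filter (fun x => x ∈ H)).erase h)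
    B.card = d / 2 ∧ B + B = Finset.univ \ {h + g} ∧ (B + B).card = d - 1 := by
  intro B
  obtain ⟨k, hk⟩ := hdeven
  have hmemiff : ∀ a b : K, a + b ∈ H ↔ (a ∈ H ↔ b ∈ H) := fun a b =>
    AddSubgroup.add_mem_iff_of_index_two hH
  set S : Finset K := Finset.univ.filter (fun x => x ∈ H) with hS
  have hmemS : ∀ x : K, x ∈ S ↔ x ∈ H := by
    intro x; simp [hS]
  have hcardS : S.card = d / 2 := by
    have h1 : H.index * Nat.card H = Nat.card K := AddSubgroup.index_mul_card H
    rw [hH] at h1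
    have h2 : Nat.card K = d := by rw [Nat.card_eq_fintype_card, hd]
    have h3 : S.card = Nat.card H := by
      rw [Nat.card_eq_fintype_card, hS]
      simp [Fintype.card_subtype]
    omega
  have hgS : g ∉ S.erase h := fun hx => hg ((hmemS g).1 (Finset.mem_of_mem_erase hx))
  have hhS : h ∈ S := (hmemS h).2 hh
  have hcardB : B.card = d / 2 := by
    rw [Finset.card_insert_of_notMem hgS, Finset.card_erase_of_mem hhS, hcardS]
    omega
  have hhg : h + g ∉ H := fun hx => hg (((hmemiff h g).1 hx).1 hh)
  have hBB : B + B = Finset.univ \ {h + g} := by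
    ext x
    simp only [Finset.mem_sdiff, Finset.mem_univ, Finset.mem_singleton, true_and,
      Finset.mem_add]
    constructor
    · rintro ⟨a, ha, b, hb, he⟩
      subst he
      intro he
      simp only [B, Finset.mem_insert, Finset.mem_erase, Finset.mem_filter, Finset.mem_univ, true_and] at ha hb
      rcases ha with hag | ⟨hah, haH⟩
      · rcases hb with hbg | ⟨hbh, hbH⟩
        · have : a + b ∈ H := (hmemiff a b).2 (by rw [hag, hbg])
          rw [he] at this; exact hhg this
        · rw [hag, add_comm g b] at he
          exact hbh (add_right_cancel he)
      · rcases hb with hbg | ⟨hbh, hbH⟩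
        · rw [hbg] at he
          exact hah (add_right_cancel he)
        · have : a + b ∈ H := H.add_mem haH hbH
          rw [he] at this; exact hhg this
    · intro hx
      by_cases hxH : x ∈ H
      · -- pick a ∈ H, a ≠ h, a ≠ x - h
        have hcard3 : 3 ≤ S.card := by omega
        have : ((S.erase h).erase (x - h)).Nonempty := by
          apply Finset.card_pos.1
          have := Finset.card_erase_le (s := S.erase h) (a := x - h)
          have h1 : (S.erase h).card = S.card - 1 := Finset.card_erase_of_mem hhS
          have h2 : (S.erase h).card - 1 ≤ ((S.erase h).erase (x - h)).card :=
            Finset.pred_card_le_card_erase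
          omega
        obtain ⟨a, ha⟩ := this
        have haxh : a ≠ x - h := (Finset.ne_of_mem_erase ha)
        have hah : a ≠ h := Finset.ne_of_mem_erase (Finset.mem_of_mem_erase ha)
        have haH : a ∈ H := (hmemS a).1 (Finset.mem_of_mem_erase (Finset.mem_of_mem_erase ha))
        refine ⟨a, ?_, x - a, ?_, by abel⟩
        · simp only [B, Finset.mem_insert, Finset.mem_erase, Finset.mem_filter, Finset.mem_univ, true_and]
          exact Or.inr ⟨hah, haH⟩
        · simp only [B, Finset.mem_insert, Finset.mem_erase, Finset.mem_filter, Finset.mem_univ, true_and]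
          refine Or.inr ⟨?_, H.sub_mem hxH haH⟩
          intro he
          apply haxh
          have : x - a = h := he
          have : a = x - h := by
            rw [← this]; abel
          exact this
      · -- x = (x - g) + g with x - g ∈ H
        have hxg : x - g ∈ H := by
          by_contra hc
          have : (x - g) + g ∈ H := (hmemiff (x - g) g).2 (iff_of_false hc hg)
          rw [sub_add_cancel] at this
          exact hxH this
        have hne : x - g ≠ h := by
          intro he
          apply hx
          rw [← he]; abel
        refine ⟨x - g, ?_, g, ?_, by abel⟩
        · simp only [B, Finset.mem_insert, Finset.mem_erase, Finset.mem_filter, Finset.mem_univ, true_and]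
          exact Or.inr ⟨hne, hxg⟩
        · simp [B]
  refine ⟨hcardB, hBB, ?_⟩
  rw [hBB, Finset.card_sdiff_of_subset (by simp), Finset.card_singleton, Finset.card_univ, hd]
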